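/- arXiv:1806.07162 — 2 statements merged into one kernel-verified Lean document; each statement's English description precedes it below -/
import Mathlib

section
/- Let M be a 5×5 real matrix with minor-sums J_1, …, J_5, and suppose J_4 > 0 and either (i) J_1 > 0, J_5 > 0 and J_2·J_3 < 0, or (ii) J_1 < 0, J_5 < 0 and J_2·J_3 > 0. Then D2(M) < 0. -/
/-- The `k`-th minor-sum of a `5 × 5` real matrix `M`: the sum of its `k × k`
principal minors, i.e. `(-1)^k` times the coefficient of `X^(5-k)` in the
characteristic polynomial. -/
noncomputable def J5 (M : Matrix (Fin 5) (Fin 5) ℝ) (k : ℕ) : ℝ :=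
  (-1) ^ k * (Matrix.charpoly M).coeff (5 - k)

/-- The determinant of the second additive compound of a `5 × 5` real matrix. -/
noncomputable def D2 (M : Matrix (Fin 5) (Fin 5) ℝ) : ℝ :=
  -(J5 M 5) ^ 2 + 2 * J5 M 1 * J5 M 4 * J5 M 5 + J5 M 2 * J5 M 3 * J5 M 5
    - J5 M 1 * (J5 M 2) ^ 2 * J5 M 5 - (J5 M 1) ^ 2 * (J5 M 4) ^ 2
    - (J5 M 3) ^ 2 * J5 M 4 + J5 M 1 * J5 M 2 * J5 M 3 * J5 M 4

private lemma d2_alg (a b c d e : ℝ) (h4 : 0 < d)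
    (h : (0 < a ∧ 0 < e ∧ b * c < 0) ∨ (a < 0 ∧ e < 0 ∧ 0 < b * c)) :
    -e ^ 2 + 2 * a * d * e + b * c * e - a * b ^ 2 * e - a ^ 2 * d ^ 2
      - c ^ 2 * d + a * b * c * d < 0 := by
  have key : -e ^ 2 + 2 * a * d * e + b * c * e - a * b ^ 2 * e - a ^ 2 * d ^ 2
      - c ^ 2 * d + a * b * c * d = -(e - a * d) ^ 2 + (c - a * b) * (b * e - c * d) := by
    ring
  rw [key]
  have hsq := sq_nonneg (e - a * d)
  have hprod : (c - a * b) * (b * e - c * d) < 0 := by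
    rcases lt_trichotomy b 0 with hb | hb | hb
    · rcases h with ⟨ha, he, hbc⟩ | ⟨ha, he, hbc⟩
      · have hc : 0 < c := by nlinarith
        exact mul_neg_of_pos_of_neg (by nlinarith) (by nlinarith [mul_pos hc h4])
      · have hc : c < 0 := by nlinarith
        exact mul_neg_of_neg_of_pos (by nlinarith) (by nlinarith [mul_pos (neg_pos.mpr hb) (neg_pos.mpr he), mul_pos (neg_pos.mpr hc) h4])
    · rcases h with ⟨_, _, hbc⟩ | ⟨_, _, hbc⟩ <;> simp [hb] at hbc
    · rcases h with ⟨ha, he, hbc⟩ | ⟨ha, he, hbc⟩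
      · have hc : c < 0 := by nlinarith
        exact mul_neg_of_neg_of_pos (by nlinarith) (by nlinarith [mul_pos hb he, mul_pos (neg_pos.mpr hc) h4])
      · have hc : 0 < c := by nlinarith
        exact mul_neg_of_pos_of_neg (by nlinarith) (by nlinarith [mul_pos hc h4, mul_pos hb (neg_pos.mpr he)])
  linarith

theorem fivePattern_D2_neg
    (M : Matrix (Fin 5) (Fin 5) ℝ)
    (h4 : 0 < J5 M 4)
    (h : (0 < J5 M 1 ∧ 0 < J5 M 5 ∧ J5 M 2 * J5 M 3 < 0) ∨
         (J5 M 1 < 0 ∧ J5 M 5 < 0 ∧ 0 < J5 M 2 * J5 M 3)) :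
    D2 M < 0 := by
  have := d2_alg (J5 M 1) (J5 M 2) (J5 M 3) (J5 M 4) (J5 M 5) h4 h
  unfold D2
  linarith
end

section
/- Let M be a 5×5 real matrix with minor-sums J_1, …, J_5, and suppose J_1·J_2·J_3 > 0, J_1·J_5 > 0 and J_1·(J_1·J_4 − J_2·J_3) > 0. Then D2(M) ≤ 0. -/
lemma key_pos (a b c d e : ℝ) (ha : 0 < a)
    (h1 : 0 < a * b * c) (h2 : 0 < a * e) (h3 : 0 < a * (a * d - b * c)) :
    -e ^ 2 + 2 * a * d * e + b * c * e - a * b ^ 2 * e - a ^ 2 * d ^ 2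
      - c ^ 2 * d + a * b * c * d ≤ 0 := by
  have he : 0 < e := by nlinarith
  have hbc : 0 < b * c := by nlinarith
  have hdb : b * c < a * d := by nlinarith
  have hd : 0 < d := by nlinarith
  have hP0 : 0 < a * (a * d - b * c) + c ^ 2 := by nlinarith [sq_nonneg c]
  have hP : 0 < d * (a * (a * d - b * c) + c ^ 2) := mul_pos hd hP0
  rcases le_or_gt (4 * d) (b ^ 2) with hcase | hcase
  · have hS : 2 * a * d + b * c - a * b ^ 2 < 0 := by
      nlinarith [mul_le_mul_of_nonneg_left hcase ha.le]
    nlinarith [mul_pos he (neg_pos.mpr hS), hP, sq_nonneg e]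
  · nlinarith [sq_nonneg (2 * e - (2 * a * d + b * c - a * b ^ 2)),
      mul_nonneg (sq_nonneg (c - a * b)) (by linarith : (0:ℝ) ≤ 4 * d - b ^ 2)]

lemma key (a b c d e : ℝ)
    (h1 : 0 < a * b * c) (h2 : 0 < a * e) (h3 : 0 < a * (a * d - b * c)) :
    -e ^ 2 + 2 * a * d * e + b * c * e - a * b ^ 2 * e - a ^ 2 * d ^ 2
      - c ^ 2 * d + a * b * c * d ≤ 0 := by
  rcases lt_trichotomy a 0 with ha | ha | ha
  · have h1' : 0 < -a * b * -c := by nlinarith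
    have h2' : 0 < -a * -e := by nlinarith
    have h3' : 0 < -a * (-a * d - b * -c) := by nlinarith
    have := key_pos (-a) b (-c) d (-e) (by linarith) h1' h2' h3'
    nlinarith [this]
  · exfalso; rw [ha] at h1; simp at h1
  · exact key_pos a b c d e ha h1 h2 h3

theorem fivePattern_D2_nonpos_2
    (M : Matrix (Fin 5) (Fin 5) ℝ)
    (h123 : 0 < J5 M 1 * J5 M 2 * J5 M 3)
    (h15 : 0 < J5 M 1 * J5 M 5)
    (hstar : 0 < J5 M 1 * (J5 M 1 * J5 M 4 - J5 M 2 * J5 M 3)) :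
    D2 M ≤ 0 := by
  have := key (J5 M 1) (J5 M 2) (J5 M 3) (J5 M 4) (J5 M 5) h123 h15 hstar
  unfold D2
  linarith [this]
end
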